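/- Let G=(V,E) be a finite simple graph with a graph tensor network on it, let b→a be a directed edge, and suppose that for each c∈∂b\{a} a Hermitian positive semidefinite matrix m_{c→b} ∈ ℂ^{d_cb×d_cb} is given. Then the belief-propagation update m_{b→a}[j,j'] = Σ T_b[i_b,(j_{cb})_{c∈∂b}]·T_b*[i_b,(j'_{cb})_{c∈∂b}]·Π_{c∈∂b\{a}} m_{c→b}[j_{cb}, j'_{cb}] — summed over i_b∈{0,1} and over all unprimed and primed bond-index values on the edges {c,b} with c∈∂b\{a}, with the bond index of edge {a,b} fixed to j (unprimed) and j' (primed) — produces a Hermitian positive semidefinite matrix m_{b→a} ∈ ℂ^{d_ab×d_ab}. -/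

import Mathlib

open scoped BigOperators

variable {V : Type*} [Fintype V] [DecidableEq V]

/-- A graph tensor network on a finite simple graph `G`: a bond dimension `d e ≥ 1` for each
edge `e`, and for each vertex `a` a tensor `T a` taking a physical index in `Fin 2` and a bond
index (a natural number, relevant values being those `< d e`) for each edge incident to `a`. -/
structure TensorNet (G : SimpleGraph V) [DecidableRel G.Adj] where
  d : G.edgeSet → ℕ
  d_pos : ∀ e, 0 < d e
  T : ∀ a : V, Fin 2 → ({e : G.edgeSet // a ∈ (e : Sym2 V)} → ℕ) → ℂ

namespace TensorNet

variable {G : SimpleGraph V} [DecidableRel G.Adj]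

/-- The state represented by a graph tensor network:
`Ψ[(i_a)_{a∈V}] = Σ_{j} Π_{a∈V} T_a[i_a, (j_{ab})_{b∈∂a}]`, the sum running over all assignments
of a bond-index value `j_e ∈ {0,…,d_e−1}` to each edge `e ∈ E`. -/
noncomputable def psi (net : TensorNet G) (i : V → Fin 2) : ℂ :=
  ∑ j ∈ Fintype.piFinset (fun e : G.edgeSet => Finset.range (net.d e)),
    ∏ a : V, net.T a (i a) (fun e => j e.1)

/-- The (i,i') entry of the single-qubit reduced density matrix
`ρ_a = Tr_{V∖{a}} |Ψ⟩⟨Ψ|` of the represented state at vertex `a`. -/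
noncomputable def rho (net : TensorNet G) (a : V) (i i' : Fin 2) : ℂ :=
  ∑ f : ({c : V // c ≠ a} → Fin 2),
    net.psi (fun c => if h : c = a then i else f ⟨c, h⟩) *
      (starRingEnd ℂ) (net.psi (fun c => if h : c = a then i' else f ⟨c, h⟩))

/-- The environment tensor `ξ_a` of vertex `a`. -/
noncomputable def env (net : TensorNet G) (a : V)
    (J J' : {e : G.edgeSet // a ∈ (e : Sym2 V)} → ℕ) : ℂ :=
  ∑ i : ({c : V // c ≠ a} → Fin 2),
    ∑ k ∈ Fintype.piFinset (fun e : {e : G.edgeSet // a ∉ (e : Sym2 V)} =>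
        Finset.range (net.d e.1)),
      ∑ k' ∈ Fintype.piFinset (fun e : {e : G.edgeSet // a ∉ (e : Sym2 V)} =>
          Finset.range (net.d e.1)),
        ∏ c : {c : V // c ≠ a},
          net.T c.1 (i c)
              (fun e => if h : a ∈ (e.1 : Sym2 V) then J ⟨e.1, h⟩ else k ⟨e.1, h⟩) *
            (starRingEnd ℂ)
              (net.T c.1 (i c)
                (fun e => if h : a ∈ (e.1 : Sym2 V) then J' ⟨e.1, h⟩ else k' ⟨e.1, h⟩))

end TensorNet
open Matrix

/-- The element of the incident-edge set of `b` given by a neighbor `c` of `b`. -/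
def nbrEdge {V : Type*} [Fintype V] [DecidableEq V] {G : SimpleGraph V} [DecidableRel G.Adj]
    {b c : V} (h : G.Adj b c) : {e : G.edgeSet // b ∈ (e : Sym2 V)} :=
  ⟨⟨s(b, c), (SimpleGraph.mem_edgeSet G).mpr h⟩, Sym2.mem_mk_left b c⟩

open scoped ComplexOrder in
/-- For a graph tensor network on a finite simple graph, given a directed edge
`b → a` and Hermitian positive semidefinite message matrices `m_{c→b}` for all `c ∈ ∂b∖{a}`, the
belief-propagation update produces a Hermitian positive semidefinite matrix `m_{b→a}`. -/
theorem bp_update_posSemidef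
    {V : Type*} [Fintype V] [DecidableEq V] {G : SimpleGraph V} [DecidableRel G.Adj]
    (net : TensorNet G) (a b : V) (hab : G.Adj a b)
    (m : ∀ c : {c : V // G.Adj b c ∧ c ≠ a},
      Matrix (Fin (net.d (nbrEdge c.2.1).1)) (Fin (net.d (nbrEdge c.2.1).1)) ℂ)
    (hm : ∀ c, (m c).IsHermitian ∧ (m c).PosSemidef) :
    (Matrix.of fun j j' : Fin (net.d ⟨s(a, b), (SimpleGraph.mem_edgeSet G).mpr hab⟩) =>
        ∑ ib : Fin 2,
          ∑ g : (∀ c : {c : V // G.Adj b c ∧ c ≠ a}, Fin (net.d (nbrEdge c.2.1).1)),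
            ∑ g' : (∀ c : {c : V // G.Adj b c ∧ c ≠ a}, Fin (net.d (nbrEdge c.2.1).1)),
              net.T b ib (fun e =>
                  if (e.1 : Sym2 V) = s(a, b) then (j : ℕ)
                  else if h2 : G.Adj b (Sym2.Mem.other e.2) ∧ (Sym2.Mem.other e.2) ≠ a then
                    (g ⟨Sym2.Mem.other e.2, h2⟩ : ℕ)
                  else 0) *
                (starRingEnd ℂ)
                  (net.T b ib (fun e =>
                    if (e.1 : Sym2 V) = s(a, b) then (j' : ℕ)
                    else if h2 : G.Adj b (Sym2.Mem.other e.2) ∧ (Sym2.Mem.other e.2) ≠ a then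
                      (g' ⟨Sym2.Mem.other e.2, h2⟩ : ℕ)
                    else 0)) *
                ∏ c : {c : V // G.Adj b c ∧ c ≠ a}, m c (g c) (g' c)).IsHermitian ∧
    (Matrix.of fun j j' : Fin (net.d ⟨s(a, b), (SimpleGraph.mem_edgeSet G).mpr hab⟩) =>
        ∑ ib : Fin 2,
          ∑ g : (∀ c : {c : V // G.Adj b c ∧ c ≠ a}, Fin (net.d (nbrEdge c.2.1).1)),
            ∑ g' : (∀ c : {c : V // G.Adj b c ∧ c ≠ a}, Fin (net.d (nbrEdge c.2.1).1)),
              net.T b ib (fun e =>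
                  if (e.1 : Sym2 V) = s(a, b) then (j : ℕ)
                  else if h2 : G.Adj b (Sym2.Mem.other e.2) ∧ (Sym2.Mem.other e.2) ≠ a then
                    (g ⟨Sym2.Mem.other e.2, h2⟩ : ℕ)
                  else 0) *
                (starRingEnd ℂ)
                  (net.T b ib (fun e =>
                    if (e.1 : Sym2 V) = s(a, b) then (j' : ℕ)
                    else if h2 : G.Adj b (Sym2.Mem.other e.2) ∧ (Sym2.Mem.other e.2) ≠ a then
                      (g' ⟨Sym2.Mem.other e.2, h2⟩ : ℕ)
                    else 0)) *
                ∏ c : {c : V // G.Adj b c ∧ c ≠ a}, m c (g c) (g' c)).PosSemidef := by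

  classical
  set M := (Matrix.of fun j j' : Fin (net.d ⟨s(a, b), (SimpleGraph.mem_edgeSet G).mpr hab⟩) =>
        ∑ ib : Fin 2,
          ∑ g : (∀ c : {c : V // G.Adj b c ∧ c ≠ a}, Fin (net.d (nbrEdge c.2.1).1)),
            ∑ g' : (∀ c : {c : V // G.Adj b c ∧ c ≠ a}, Fin (net.d (nbrEdge c.2.1).1)),
              net.T b ib (fun e =>
                  if (e.1 : Sym2 V) = s(a, b) then (j : ℕ)
                  else if h2 : G.Adj b (Sym2.Mem.other e.2) ∧ (Sym2.Mem.other e.2) ≠ a then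
                    (g ⟨Sym2.Mem.other e.2, h2⟩ : ℕ)
                  else 0) *
                (starRingEnd ℂ)
                  (net.T b ib (fun e =>
                    if (e.1 : Sym2 V) = s(a, b) then (j' : ℕ)
                    else if h2 : G.Adj b (Sym2.Mem.other e.2) ∧ (Sym2.Mem.other e.2) ≠ a then
                      (g' ⟨Sym2.Mem.other e.2, h2⟩ : ℕ)
                    else 0)) *
                ∏ c : {c : V // G.Adj b c ∧ c ≠ a}, m c (g c) (g' c)) with hM
  let ι := {c : V // G.Adj b c ∧ c ≠ a}
  let n : ι → ℕ := fun c => net.d (nbrEdge c.2.1).1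
  let B : ∀ c : ι, Matrix (Fin (n c)) (Fin (n c)) ℂ := fun c => by open scoped MatrixOrder in exact CFC.sqrt (m c)
  have hB : ∀ (c : ι) (x y : Fin (n c)),
      m c x y = ∑ t, (starRingEnd ℂ) (B c t x) * B c t y := by
    intro c x y
    have h1 : (B c)ᴴ * B c = m c := by
      open scoped MatrixOrder in
      rw [(CFC.sqrt_nonneg (m c)).posSemidef.1.eq]
      exact CFC.sqrt_mul_sqrt_self (m c) (hm c).2.nonneg
    rw [← h1, Matrix.mul_apply]
    simp [Matrix.conjTranspose_apply]
  let κ := (c : ι) → Fin (n c)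
  let F : Fin 2 → Fin (net.d ⟨s(a, b), (SimpleGraph.mem_edgeSet G).mpr hab⟩) → κ → ℂ :=
    fun ib j g =>
      net.T b ib (fun e =>
        if (e.1 : Sym2 V) = s(a, b) then (j : ℕ)
        else if h2 : G.Adj b (Sym2.Mem.other e.2) ∧ (Sym2.Mem.other e.2) ≠ a then
          (g ⟨Sym2.Mem.other e.2, h2⟩ : ℕ)
        else 0)
  let C : Matrix (Fin 2 × κ) (Fin (net.d ⟨s(a, b), (SimpleGraph.mem_edgeSet G).mpr hab⟩)) ℂ :=
    fun p j => ∑ g : κ, (starRingEnd ℂ) (F p.1 j g) * ∏ c, B c (p.2 c) (g c)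
  have key : M = Cᴴ * C := by
    ext j j'
    rw [hM, Matrix.mul_apply]
    simp only [Matrix.of_apply, Matrix.conjTranspose_apply]
    rw [Fintype.sum_prod_type]
    refine Finset.sum_congr rfl fun ib _ => ?_
    have hlhs : ∀ g g' : κ,
        F ib j g * (starRingEnd ℂ) (F ib j' g') * ∏ c, m c (g c) (g' c)
          = ∑ k : κ, (F ib j g * ∏ c, (starRingEnd ℂ) (B c (k c) (g c))) *
              ((starRingEnd ℂ) (F ib j' g') * ∏ c, B c (k c) (g' c)) := by
      intro g g'
      simp_rw [hB]
      rw [Fintype.prod_sum, Finset.mul_sum]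
      refine Finset.sum_congr rfl fun k _ => ?_
      rw [Finset.prod_mul_distrib]
      ring
    calc
      ∑ g : κ, ∑ g' : κ, F ib j g * (starRingEnd ℂ) (F ib j' g') * ∏ c, m c (g c) (g' c)
          = ∑ g : κ, ∑ g' : κ, ∑ k : κ,
              (F ib j g * ∏ c, (starRingEnd ℂ) (B c (k c) (g c))) *
                ((starRingEnd ℂ) (F ib j' g') * ∏ c, B c (k c) (g' c)) := by
            simp_rw [hlhs]
      _ = ∑ g : κ, ∑ k : κ, ∑ g' : κ,
              (F ib j g * ∏ c, (starRingEnd ℂ) (B c (k c) (g c))) *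
                ((starRingEnd ℂ) (F ib j' g') * ∏ c, B c (k c) (g' c)) :=
            Finset.sum_congr rfl fun g _ => Finset.sum_comm
      _ = ∑ k : κ, ∑ g : κ, ∑ g' : κ,
              (F ib j g * ∏ c, (starRingEnd ℂ) (B c (k c) (g c))) *
                ((starRingEnd ℂ) (F ib j' g') * ∏ c, B c (k c) (g' c)) :=
            Finset.sum_comm
      _ = ∑ k : κ, star (C (ib, k) j) * C (ib, k) j' := by
            refine Finset.sum_congr rfl fun k _ => ?_
            have hstar : star (C (ib, k) j)
                = ∑ g : κ, F ib j g * ∏ c, (starRingEnd ℂ) (B c (k c) (g c)) := by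
              show (starRingEnd ℂ) (C (ib, k) j) = _
              simp only [C, map_sum, _root_.map_mul, _root_.map_prod, Complex.conj_conj]
            rw [hstar]
            show _ = (∑ g : κ, F ib j g * ∏ c, (starRingEnd ℂ) (B c (k c) (g c))) *
              (∑ g' : κ, (starRingEnd ℂ) (F ib j' g') * ∏ c, B c (k c) (g' c))
            rw [Finset.sum_mul_sum]
  have hpsd : M.PosSemidef := key ▸ Matrix.posSemidef_conjTranspose_mul_self C
  exact ⟨hpsd.1, hpsd⟩
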